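/- Let N be a feed-forward network with layers C₀, C₁, …, C_m and adjacency matrices A₁, …, A_k, and let f₀, f₁, …, f_k be real numbers. Then the matrix J = f₀·Id + Σ_{i=1}^k f_i·A_i has exactly the eigenvalues f₀ + Σ_{i=1}^k f_i and f₀ (when m ≥ 1); equivalently, its characteristic polynomial is (x − (f₀ + Σ_{i=1}^k f_i))^{|C₀|} · (x − f₀)^{|C| − |C₀|}. -/

import Mathlib

open Polynomial

/-- the Jacobian `J = f₀·Id + Σ f_i·A_i` of a feed-forward system
at a fully synchronous equilibrium has characteristic polynomial
`(X − (f₀ + Σ f_i))^{|C₀|} (X − f₀)^{|C|−|C₀|}`. -/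
theorem stmt_9 {C : Type*} [Fintype C] [DecidableEq C] {k : ℕ}
    (σ : Fin k → C → C) (m : ℕ) (hm : 1 ≤ m)
    (layer : C → ℕ) (hlayer : ∀ c, layer c ≤ m)
    (hsurj : ∀ j ≤ m, ∃ c, layer c = j)
    (hfix : ∀ i c, layer c = 0 → σ i c = c)
    (hdown : ∀ i c j, layer c = j + 1 → layer (σ i c) = j)
    (f0 : ℝ) (f : Fin k → ℝ) :
    Matrix.charpoly
        (f0 • (1 : Matrix C C ℝ) +
          ∑ i, f i • Matrix.of (fun c c' => if c' = σ i c then (1 : ℝ) else 0)) =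
      (X - Polynomial.C (f0 + ∑ i, f i)) ^
          (Finset.univ.filter (fun c => layer c = 0)).card *
        (X - Polynomial.C f0) ^
          (Fintype.card C - (Finset.univ.filter (fun c => layer c = 0)).card) := by
  classical
  set J : Matrix C C ℝ :=
    f0 • (1 : Matrix C C ℝ) +
      ∑ i, f i • Matrix.of (fun c c' => if c' = σ i c then (1 : ℝ) else 0) with hJdef
  -- entries of J
  have hJ : ∀ c c', J c c' =
      (if c = c' then f0 else 0) + ∑ i, f i * (if c' = σ i c then (1:ℝ) else 0) := by
    intro c c'
    simp [hJdef, Matrix.add_apply, Matrix.smul_apply, Matrix.one_apply,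
      Matrix.sum_apply, mul_ite, mul_one, mul_zero]
  have hσne : ∀ (i : Fin k) (c c' : C), layer c ≤ layer c' → c ≠ c' → c' ≠ σ i c := by
    intro i c c' hle hne
    rcases Nat.eq_zero_or_pos (layer c) with h0 | hpos
    · rw [hfix i c h0]; exact fun h => hne h.symm
    · obtain ⟨j, hj⟩ := Nat.exists_eq_add_of_lt hpos
      have hj' : layer c = j + 1 := by omega
      have := hdown i c j hj'
      intro h; subst h
      omega
  have hJoff : ∀ c c', c ≠ c' → layer c ≤ layer c' → J c c' = 0 := by
    intro c c' hne hle
    rw [hJ]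
    rw [if_neg hne]
    rw [Finset.sum_eq_zero, zero_add]
    intro i _
    rw [if_neg (hσne i c c' hle hne), mul_zero]
  have hJdiag0 : ∀ c, layer c = 0 → J c c = f0 + ∑ i, f i := by
    intro c hc
    rw [hJ, if_pos rfl]
    congr 1
    refine Finset.sum_congr rfl fun i _ => ?_
    rw [if_pos (hfix i c hc).symm, mul_one]
  have hJdiag : ∀ c, layer c ≠ 0 → J c c = f0 := by
    intro c hc
    rw [hJ, if_pos rfl]
    rw [Finset.sum_eq_zero, add_zero]
    intro i _
    obtain ⟨j, hj⟩ : ∃ j, layer c = j + 1 := ⟨layer c - 1, by omega⟩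
    have := hdown i c j hj
    rw [if_neg (fun h => by rw [← h] at this; omega), mul_zero]
  -- block triangular structure of the charmatrix
  set b : C → ℤ := fun c => -(layer c : ℤ) with hbdef
  have hBT : (Matrix.charmatrix J).BlockTriangular b := by
    intro c c' h
    have hlt : layer c < layer c' := by simp only [hbdef, neg_lt_neg_iff] at h; exact_mod_cast h
    have hne : c ≠ c' := fun h => by subst h; omega
    rw [Matrix.charmatrix_apply_ne _ _ _ hne, hJoff c c' hne hlt.le, map_zero, neg_zero]
  rw [Matrix.charpoly, hBT.det]
  -- the image of b
  have himg : Finset.univ.image b = (Finset.range (m+1)).image (fun j : ℕ => (-(j : ℤ))) := by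
    ext a
    simp only [Finset.mem_image, Finset.mem_univ, true_and, Finset.mem_range]
    constructor
    · rintro ⟨c, rfl⟩
      exact ⟨layer c, by have := hlayer c; omega, rfl⟩
    · rintro ⟨j, hj, rfl⟩
      obtain ⟨c, hc⟩ := hsurj j (by omega)
      exact ⟨c, by simp [hbdef, hc]⟩
  rw [himg, Finset.prod_image (by intro x _ y _ h; have h' : -(x:ℤ) = -(y:ℤ) := h; omega)]
  -- compute each block determinant
  have hblock : ∀ j ∈ Finset.range (m+1),
      ((Matrix.charmatrix J).toSquareBlock b (-(j:ℤ))).det =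
        (if j = 0 then X - Polynomial.C (f0 + ∑ i, f i) else X - Polynomial.C f0) ^
          (Finset.univ.filter (fun c => layer c = j)).card := by
    intro j _
    have hmem : ∀ c : C, b c = -(j:ℤ) ↔ layer c = j := by
      intro c; simp only [hbdef, neg_inj]; exact_mod_cast Iff.rfl
    have hdiagmat : (Matrix.charmatrix J).toSquareBlock b (-(j:ℤ)) =
        Matrix.diagonal (fun _ => if j = 0 then X - Polynomial.C (f0 + ∑ i, f i)
          else X - Polynomial.C f0) := by
      apply Matrix.ext
      rintro ⟨c, hc⟩ ⟨c', hc'⟩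
      have hc1 : layer c = j := (hmem c).mp hc
      have hc1' : layer c' = j := (hmem c').mp hc'
      by_cases hcc : c = c'
      · subst hcc
        have hcc' : (⟨c, hc⟩ : {a // b a = -(j:ℤ)}) = ⟨c, hc'⟩ := rfl
        rw [hcc']
        simp only [Matrix.toSquareBlock_def, Matrix.of_apply, Matrix.diagonal_apply_eq]
        rw [Matrix.charmatrix_apply_eq]
        by_cases hj0 : j = 0
        · rw [if_pos hj0, hJdiag0 c (by omega)]
        · rw [if_neg hj0, hJdiag c (by omega)]
      · have hne : (⟨c, hc⟩ : {a // b a = -(j:ℤ)}) ≠ ⟨c', hc'⟩ := by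
          simp [Subtype.ext_iff, hcc]
        simp only [Matrix.toSquareBlock_def, Matrix.of_apply, Matrix.diagonal_apply_ne _ hne]
        rw [Matrix.charmatrix_apply_ne _ _ _ hcc, hJoff c c' hcc (by omega), map_zero, neg_zero]
    rw [hdiagmat, Matrix.det_diagonal, Finset.prod_const, Finset.card_univ]
    congr 1
    rw [Fintype.card_subtype]
    exact congrArg Finset.card (Finset.filter_congr (fun c _ => by simp [hmem c]))
  rw [Finset.prod_congr rfl hblock, Finset.prod_range_succ']
  have htot : Fintype.card C =
      ∑ j ∈ Finset.range (m+1), (Finset.univ.filter (fun c => layer c = j)).card := by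
    rw [← Finset.card_univ]
    exact Finset.card_eq_sum_card_fiberwise
      (fun c _ => Finset.mem_range.mpr (by have := hlayer c; omega))
  rw [Finset.sum_range_succ'] at htot
  simp only [Nat.succ_ne_zero, if_false, if_pos rfl]
  rw [Finset.prod_pow_eq_pow_sum]
  rw [show ∑ j ∈ Finset.range m, (Finset.univ.filter (fun c => layer c = j + 1)).card =
      Fintype.card C - (Finset.univ.filter (fun c => layer c = 0)).card by omega]
  rw [if_pos trivial, mul_comm]
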